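/- Let J = (f_1,...,f_n), L = J : f_{n+1} in a commutative ring R, let A and M be DG algebra resolutions of R/J and R/L respectively, and let φ: A → M be a DG algebra homomorphism lifting the surjection R/J → R/L. Define the A-action on M by a·m = φ(a)m. If ψ: M → A is a complex homomorphism with φ∘ψ = f_{n+1}·id_M, and either (i) f_{n+1} is a non-zerodivisor of R and the image of ψ is an ideal of A, or (ii) φ is injective, then ψ is a DG A-module homomorphism, i.e., ψ(φ(a)m) = aψ(m) for all a ∈ A, m ∈ M. -/

import Mathlib

/-! Statement 12: with `J = (f₁,…,fₙ)`, `L = J : f_{n+1}`, DG algebra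
resolutions `A` of `R/J` and `M` of `R/L`, and a DG algebra homomorphism
`φ : A → M` lifting `R/J → R/L`, a complex homomorphism `ψ : M → A` with
`φ ∘ ψ = f_{n+1}·id_M` is a DG `A`-module homomorphism (where `A` acts on `M`
via `φ`), provided (i) `f_{n+1}` is a non-zerodivisor and the image of `ψ` is
an ideal of `A`, or (ii) `φ` is injective. -/

open Int (negOnePow)

variable (R : Type*) [CommRing R]

/-- A (graded-commutative, non-negatively graded) DG algebra structure on an
`R`-module `A`. -/
structure DGAlgebra (A : Type*) [AddCommGroup A] [Module R A] where
  /-- the grading -/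
  gr : ℤ → Submodule R A
  /-- the multiplication -/
  mul : A →ₗ[R] A →ₗ[R] A
  /-- the unit -/
  one : A
  /-- the differential -/
  d : A →ₗ[R] A
  gr_neg : ∀ i < 0, gr i = ⊥
  gr_internal : DirectSum.IsInternal gr
  mul_mem : ∀ i j a b, a ∈ gr i → b ∈ gr j → mul a b ∈ gr (i + j)
  one_mem : one ∈ gr 0
  one_mul : ∀ a, mul one a = a
  mul_one : ∀ a, mul a one = a
  mul_assoc : ∀ a b c, mul (mul a b) c = mul a (mul b c)
  mul_comm : ∀ i j a b, a ∈ gr i → b ∈ gr j →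
    mul a b = (negOnePow (i * j) : ℤ) • mul b a
  d_mem : ∀ i a, a ∈ gr i → d a ∈ gr (i - 1)
  d_sq : ∀ a, d (d a) = 0
  leibniz : ∀ i a b, a ∈ gr i →
    d (mul a b) = mul (d a) b + (negOnePow i : ℤ) • mul a (d b)

/-- A DG algebra resolution of `R/I`: a DG algebra which is a free resolution
of `R/I`, via an augmentation `aug : A → R/I`. -/
structure DGAlgebraResolution (A : Type*) [AddCommGroup A] [Module R A]
    (I : Ideal R) extends DGAlgebra R A where
  free : Module.Free R A
  /-- the augmentation -/
  aug : A →ₗ[R] R ⧸ I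
  aug_one : aug one = 1
  aug_mul : ∀ a b, aug (mul a b) = aug a * aug b
  aug_zero : ∀ i, i ≠ 0 → ∀ a ∈ gr i, aug a = 0
  aug_surj : Function.Surjective aug
  aug_d : ∀ a, aug (d a) = 0
  exact_zero : ∀ a ∈ gr 0, aug a = 0 → ∃ b ∈ gr 1, d b = a
  exact_pos : ∀ i : ℤ, 1 ≤ i → ∀ a ∈ gr i, d a = 0 → ∃ b ∈ gr (i + 1), d b = a
theorem stmt12 {R : Type*} [CommRing R] {n : ℕ} (f : Fin n → R) (fn1 : R)
    {J L : Ideal R}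
    (hJ : J = Ideal.span (Set.range f)) (hL : L = J.colon (Ideal.span {fn1}))
    (hJL : J ≤ L)
    {A : Type*} [AddCommGroup A] [Module R A]
    {M : Type*} [AddCommGroup M] [Module R M]
    (𝒜 : DGAlgebraResolution R A J) (ℳ : DGAlgebraResolution R M L)
    -- `φ` is a DG algebra homomorphism lifting `R/J → R/L`
    (φ : A →ₗ[R] M)
    (hφ_one : φ 𝒜.one = ℳ.one)
    (hφ_mul : ∀ a b, φ (𝒜.mul a b) = ℳ.mul (φ a) (φ b))
    (hφ_mem : ∀ i a, a ∈ 𝒜.gr i → φ a ∈ ℳ.gr i)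
    (hφ_chain : ∀ a, φ (𝒜.d a) = ℳ.d (φ a))
    (hφ_lift : ∀ a, ℳ.aug (φ a) = Ideal.Quotient.factor hJL (𝒜.aug a))
    -- `ψ` is a complex homomorphism with `φ ∘ ψ = f_{n+1}·id_M`
    (ψ : M →ₗ[R] A)
    (hψ_mem : ∀ i x, x ∈ ℳ.gr i → ψ x ∈ 𝒜.gr i)
    (hψ_chain : ∀ x, ψ (ℳ.d x) = 𝒜.d (ψ x))
    (hcomp : ∀ x, φ (ψ x) = fn1 • x)
    -- case (i) or case (ii)
    (hcase :
      ((∀ r : R, fn1 * r = 0 → r = 0) ∧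
        ∀ a x, 𝒜.mul a (ψ x) ∈ LinearMap.range ψ) ∨
      Function.Injective φ) :
    -- conclusion: `ψ` is a DG `A`-module homomorphism, `ψ(φ(a)m) = aψ(m)`
    ∀ a x, ψ (ℳ.mul (φ a) x) = 𝒜.mul a (ψ x) := by
  intro a x
  have key : φ (𝒜.mul a (ψ x)) = fn1 • ℳ.mul (φ a) x := by
    rw [hφ_mul, hcomp, map_smul]
  rcases hcase with ⟨hreg, hideal⟩ | hinj
  · obtain ⟨y, hy⟩ := hideal a x
    have h1 : fn1 • ℳ.mul (φ a) x = fn1 • y := by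
      rw [← key, ← hy, hcomp]
    haveI := ℳ.free
    let b := Module.Free.chooseBasis R M
    have heq : ℳ.mul (φ a) x = y := by
      apply b.repr.injective
      ext i
      have h2 := congrArg (fun z => b.repr z i) h1
      simp only [map_smul, Finsupp.smul_apply, smul_eq_mul] at h2
      have h3 := hreg (b.repr (ℳ.mul (φ a) x) i - b.repr y i)
        (by rw [mul_sub, h2, sub_self])
      exact sub_eq_zero.mp h3
    rw [heq, hy]
  · apply hinj
    rw [hcomp, key]
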